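/- Let x : ℝ → ℝⁿ be a continuously differentiable curve, let D ⊆ ℝⁿ be an open set containing the image of x, let f : D → ℝⁿ and g : D → ℝⁿˣᵐ be locally Lipschitz vector fields, let u : D → ℝᵐ be a continuous feedback control, and suppose x solves the closed-loop ODE ẋ(t) = f(x(t)) + g(x(t))·u(x(t)) for all t ≥ 0. Let h : D → ℝ be continuously differentiable and let α : ℝ → ℝ be a locally Lipschitz extended class 𝒦 function (strictly increasing with α(0) = 0). If for every y ∈ D the feedback satisfies the zeroing control barrier function constraint Dh(y)[f(y) + g(y)·u(y)] + α(h(y)) ≥ 0, and h(x(0)) ≥ 0, then h(x(t)) ≥ 0 for all t ≥ 0; i.e., the safe set C = {y ∈ D : h(y) ≥ 0} is forward invariant along x. -/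

import Mathlib

open Topology

/-- **Forward invariance of the safe set under a ZCBF-admissible feedback (Theorem 1).**
Let `x : ℝ → ℝⁿ` be a continuously differentiable curve, `D ⊆ ℝⁿ` an open set containing
the image of `x`, `f : D → ℝⁿ` and `g : D → ℝⁿˣᵐ` locally Lipschitz vector fields,
`u : D → ℝᵐ` a continuous feedback, and suppose `x` solves the closed-loop ODE
`ẋ(t) = f(x(t)) + g(x(t))·u(x(t))` for all `t ≥ 0`.  Let `h : D → ℝ` be continuously
differentiable and `α : ℝ → ℝ` a locally Lipschitz extended class-𝒦 function.  If the
ZCBF constraint `Dh(y)[f(y) + g(y)·u(y)] + α(h(y)) ≥ 0` holds for every `y ∈ D` and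
`h(x(0)) ≥ 0`, then `h(x(t)) ≥ 0` for all `t ≥ 0`. -/
theorem zcbf_forward_invariance
    {n m : ℕ}
    (x : ℝ → EuclideanSpace ℝ (Fin n))
    (D : Set (EuclideanSpace ℝ (Fin n)))
    (hD : IsOpen D)
    (hximg : ∀ t : ℝ, x t ∈ D)
    (f : EuclideanSpace ℝ (Fin n) → EuclideanSpace ℝ (Fin n))
    (g : EuclideanSpace ℝ (Fin n) →
      (EuclideanSpace ℝ (Fin m) →L[ℝ] EuclideanSpace ℝ (Fin n)))
    (u : EuclideanSpace ℝ (Fin n) → EuclideanSpace ℝ (Fin m))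
    (hf_lip : ∀ y ∈ D, ∃ K : NNReal, ∃ s ∈ 𝓝[D] y, LipschitzOnWith K f s)
    (hg_lip : ∀ y ∈ D, ∃ K : NNReal, ∃ s ∈ 𝓝[D] y, LipschitzOnWith K g s)
    (hu_cont : ContinuousOn u D)
    (hx_smooth : ContDiff ℝ 1 x)
    (hx_ode : ∀ t : ℝ, 0 ≤ t → HasDerivAt x (f (x t) + g (x t) (u (x t))) t)
    (h : EuclideanSpace ℝ (Fin n) → ℝ)
    (hh_smooth : ContDiffOn ℝ 1 h D)
    (α : ℝ → ℝ)
    (hα_lip : LocallyLipschitz α)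
    (hα_mono : StrictMono α)
    (hα_zero : α 0 = 0)
    (h_zcbf : ∀ y ∈ D, fderiv ℝ h y (f y + g y (u y)) + α (h y) ≥ 0)
    (h_init : h (x 0) ≥ 0) :
    ∀ t : ℝ, 0 ≤ t → h (x t) ≥ 0 := by
  intro t ht
  by_contra hneg
  push_neg at hneg
  set w : ℝ → ℝ := fun τ => h (x τ) with hw
  have hcont : Continuous w :=
    hh_smooth.continuousOn.comp_continuous hx_smooth.continuous hximg
  have hderiv : ∀ τ : ℝ, 0 ≤ τ →
      HasDerivAt w (fderiv ℝ h (x τ) (f (x τ) + g (x τ) (u (x τ)))) τ := by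
    intro τ hτ
    have hdiff : DifferentiableAt ℝ h (x τ) :=
      (hh_smooth.differentiableOn one_ne_zero).differentiableAt (hD.mem_nhds (hximg τ))
    exact hdiff.hasFDerivAt.comp_hasDerivAt τ (hx_ode τ hτ)
  -- the set of times in [0,t] where w is nonnegative
  set S : Set ℝ := Set.Icc 0 t ∩ {τ | 0 ≤ w τ} with hS
  have hS_ne : S.Nonempty := ⟨0, ⟨le_rfl, ht⟩, h_init⟩
  have hS_bdd : BddAbove S := BddAbove.mono Set.inter_subset_left bddAbove_Icc
  have hS_closed : IsClosed S :=
    isClosed_Icc.inter (isClosed_le continuous_const hcont)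
  set s := sSup S with hs
  have hsS : s ∈ S := hS_closed.csSup_mem hS_ne hS_bdd
  obtain ⟨⟨hs0, hst⟩, hws⟩ := hsS
  have hslt : s < t := lt_of_le_of_ne hst (by intro he; rw [he] at hws; exact absurd hws (not_le.mpr hneg))
  have hIoc : ∀ τ ∈ Set.Ioc s t, w τ < 0 := by
    intro τ hτ
    obtain ⟨h1, h2⟩ := hτ
    by_contra hc
    push_neg at hc
    have : τ ≤ s := le_csSup hS_bdd ⟨⟨le_trans hs0 h1.le, h2⟩, hc⟩
    linarith
  have hmono : StrictMonoOn w (Set.Icc s t) := by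
    apply strictMonoOn_of_deriv_pos (convex_Icc s t) hcont.continuousOn
    intro τ hτ
    rw [interior_Icc] at hτ
    have hτ0 : 0 ≤ τ := le_trans hs0 hτ.1.le
    have hd := hderiv τ hτ0
    rw [hd.deriv]
    have hwτ : w τ < 0 := hIoc τ ⟨hτ.1, hτ.2.le⟩
    have hα : α (w τ) < 0 := by
      have := hα_mono hwτ
      rwa [hα_zero] at this
    have := h_zcbf (x τ) (hximg τ)
    simp only [hw] at hα ⊢
    linarith
  have hlt : h (x s) < h (x t) := hmono ⟨le_rfl, hst⟩ ⟨hst, le_rfl⟩ hslt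
  have hws' : (0:ℝ) ≤ h (x s) := hws
  linarith
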